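/- For p ∈ (0,1), any positive weight sequence (λ_n), and any positive sequence (x_n), the weighted power-mean Hardy (Copson–Elliott) inequality holds: ∑_{n=1}^∞ λ_n · ((λ_1 x_1^p + ... + λ_n x_n^p)/(λ_1 + ... + λ_n))^{1/p} ≤ (1−p)^{−1/p} · ∑_{n=1}^∞ λ_n x_n. -/

import Mathlib

open Finset

private noncomputable def cpW (w : ℕ → ℝ) (n : ℕ) : ℝ := ∑ k ∈ range (n + 1), w k
private noncomputable def cpS (p : ℝ) (w x : ℕ → ℝ) (n : ℕ) : ℝ :=
  ∑ k ∈ range (n + 1), w k * x k ^ p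
private noncomputable def cpA (p : ℝ) (w x : ℕ → ℝ) (n : ℕ) : ℝ := cpS p w x n / cpW w n

section aux
variable {p : ℝ} {w x : ℕ → ℝ}

private lemma cpW_pos (hw : ∀ n, 0 < w n) (n : ℕ) : 0 < cpW w n :=
  Finset.sum_pos (fun k _ => hw k) (by simp)

private lemma cpS_pos (hw : ∀ n, 0 < w n) (hx : ∀ n, 0 < x n) (n : ℕ) : 0 < cpS p w x n :=
  Finset.sum_pos (fun k _ => mul_pos (hw k) (Real.rpow_pos_of_pos (hx k) p)) (by simp)

private lemma cpA_pos (hw : ∀ n, 0 < w n) (hx : ∀ n, 0 < x n) (n : ℕ) : 0 < cpA p w x n :=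
  div_pos (cpS_pos hw hx n) (cpW_pos hw n)

private lemma cpW_succ (n : ℕ) : cpW w (n + 1) = cpW w n + w (n + 1) :=
  Finset.sum_range_succ _ _

private lemma cpS_succ (n : ℕ) :
    cpS p w x (n + 1) = cpS p w x n + w (n + 1) * x (n + 1) ^ p :=
  Finset.sum_range_succ _ _

private lemma cpS_eq (hw : ∀ n, 0 < w n) (n : ℕ) :
    cpS p w x n = cpW w n * cpA p w x n := by
  rw [cpA, mul_div_cancel₀]
  exact (cpW_pos hw n).ne'

private lemma cpA_zero (hw : ∀ n, 0 < w n) : cpA p w x 0 = x 0 ^ p := by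
  simp only [cpA, cpS, cpW, zero_add, Finset.sum_range_one]
  rw [mul_comm, mul_div_assoc, div_self (hw 0).ne', mul_one]

private lemma rpow_one_add_sub (y : ℝ) {b : ℝ} (hb : 0 < b) :
    b * b ^ (y - 1) = b ^ y := by
  have h : b ^ y = b ^ (1 + (y - 1)) := by norm_num
  rw [h, Real.rpow_add hb, Real.rpow_one]

end aux

private lemma copson_key (hp0 : 0 < p) (hp1 : p < 1)
    (hw : ∀ n, 0 < w n) (hx : ∀ n, 0 < x n) (n : ℕ) :
    (∑ m ∈ range (n + 1), w m * cpA p w x m ^ (1 / p)) +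
      (1 / (1 - p) - 1) * (cpW w n * cpA p w x n ^ (1 / p)) ≤
    (1 / (1 - p)) * ∑ m ∈ range (n + 1), w m * x m ^ p * cpA p w x m ^ (1 / p - 1) := by
  have h1p : 0 < 1 - p := by linarith
  set q : ℝ := 1 / p with hqdef
  set c : ℝ := 1 / (1 - p) with hcdef
  have hq1 : 1 < q := one_lt_one_div hp0 hp1
  have hc1 : 1 < c := one_lt_one_div h1p (by linarith)
  have hqpos : 0 < q := by linarith
  have hcpos : 0 < c := by linarith
  have hc1p : c * (1 - p) = 1 := by rw [hcdef]; field_simp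
  have hcp : c * p = c - 1 := by nlinarith
  have hconj : q.HolderConjugate c := by
    refine ⟨?_, hqpos, hcpos⟩
    · rw [hqdef, hcdef]; simp only [one_div, inv_inv, inv_one]; ring
  have hA := cpA_pos (p := p) hw hx
  have hW := cpW_pos (w := w) hw
  induction n with
  | zero =>
      simp only [zero_add, Finset.sum_range_one]
      have hA0 : cpA p w x 0 = x 0 ^ p := cpA_zero hw
      have hW0 : cpW w 0 = w 0 := by simp [cpW]
      have hprod : x 0 ^ p * (x 0 ^ p) ^ (q - 1) = (x 0 ^ p) ^ q :=
        rpow_one_add_sub q (Real.rpow_pos_of_pos (hx 0) p)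
      rw [hA0, hW0, ← hprod]
      apply le_of_eq
      ring
  | succ n ih =>
      rw [Finset.sum_range_succ, Finset.sum_range_succ
        (f := fun m => w m * x m ^ p * cpA p w x m ^ (q - 1))]
      have hwa : w (n+1) * x (n+1) ^ p =
          cpW w (n+1) * cpA p w x (n+1) - cpW w n * cpA p w x n := by
        have h1 := cpS_succ (p := p) (w := w) (x := x) n
        rw [cpS_eq hw, cpS_eq hw] at h1
        linarith
      have hWm : cpW w (n+1) = cpW w n + w (n+1) := cpW_succ n
      have hprod : cpA p w x (n+1) * cpA p w x (n+1) ^ (q - 1) = cpA p w x (n+1) ^ q :=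
        rpow_one_add_sub q (hA (n+1))
      have hyoung : cpA p w x n * cpA p w x (n+1) ^ (q - 1) ≤
          p * cpA p w x n ^ q + (1 - p) * cpA p w x (n+1) ^ q := by
        have hy := Real.young_inequality_of_nonneg (hA n).le
          (Real.rpow_nonneg (hA (n+1)).le (q - 1)) hconj
        rw [← Real.rpow_mul (hA (n+1)).le] at hy
        have hqc : (q - 1) * c = q := by
          rw [hqdef, hcdef]; field_simp
        rw [hqc, hqdef, hcdef, div_div_eq_mul_div, div_div_eq_mul_div, div_one, div_one] at hy
        calc cpA p w x n * cpA p w x (n+1) ^ (q - 1) ≤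
            cpA p w x n ^ q * p + cpA p w x (n+1) ^ q * (1 - p) := hy
          _ = p * cpA p w x n ^ q + (1 - p) * cpA p w x (n+1) ^ q := by ring
      -- key single-step inequality
      have hstep : w (n+1) * cpA p w x (n+1) ^ q + (c - 1) * (cpW w (n+1) * cpA p w x (n+1) ^ q)
          ≤ c * (w (n+1) * x (n+1) ^ p * cpA p w x (n+1) ^ (q - 1)) +
            (c - 1) * (cpW w n * cpA p w x n ^ q) := by
        rw [hwa, hWm]
        have hy2 : c * cpW w n * (cpA p w x n * cpA p w x (n+1) ^ (q - 1)) ≤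
            c * cpW w n * (p * cpA p w x n ^ q + (1 - p) * cpA p w x (n+1) ^ q) :=
          mul_le_mul_of_nonneg_left hyoung (mul_pos hcpos (hW n)).le
        have expand : c * (((cpW w n + w (n+1)) * cpA p w x (n+1) - cpW w n * cpA p w x n) *
              cpA p w x (n+1) ^ (q - 1)) =
            c * (cpW w n + w (n+1)) * cpA p w x (n+1) ^ q -
              c * cpW w n * (cpA p w x n * cpA p w x (n+1) ^ (q - 1)) := by
          rw [← hprod]; ring
        have hy3 : c * cpW w n * (p * cpA p w x n ^ q + (1 - p) * cpA p w x (n+1) ^ q) =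
            (c - 1) * (cpW w n * cpA p w x n ^ q) + cpW w n * cpA p w x (n+1) ^ q := by
          have h4 : c * cpW w n * (p * cpA p w x n ^ q + (1 - p) * cpA p w x (n+1) ^ q) =
              (c * p) * (cpW w n * cpA p w x n ^ q) +
                (c * (1 - p)) * (cpW w n * cpA p w x (n+1) ^ q) := by ring
          rw [h4, hcp, hc1p]; ring
        rw [expand]
        linarith [hy2, hy3.le, hy3.ge]
      linarith [ih]

private lemma copson_finite (hp0 : 0 < p) (hp1 : p < 1)
    (hw : ∀ n, 0 < w n) (hx : ∀ n, 0 < x n) (N : ℕ) :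
    ∑ n ∈ range N, w n * cpA p w x n ^ (1 / p) ≤
      (1 - p) ^ (-1 / p) * ∑ n ∈ range N, w n * x n := by
  have h1p : 0 < 1 - p := by linarith
  set q : ℝ := 1 / p with hqdef
  set c : ℝ := 1 / (1 - p) with hcdef
  have hq1 : 1 < q := one_lt_one_div hp0 hp1
  have hc1 : 1 < c := one_lt_one_div h1p (by linarith)
  have hqpos : 0 < q := by linarith
  have hcpos : 0 < c := by linarith
  have hconj : q.HolderConjugate c := by
    refine ⟨?_, hqpos, hcpos⟩
    · rw [hqdef, hcdef]; simp only [one_div, inv_inv, inv_one]; ring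
  have hA := cpA_pos (p := p) hw hx
  have hW := cpW_pos (w := w) hw
  obtain rfl | hN := Nat.eq_zero_or_pos N
  · simp
  obtain ⟨M, rfl⟩ := Nat.exists_eq_add_of_le hN
  set N := 1 + M with hNdef
  have hNM : N = M + 1 := by omega
  -- abbreviations
  set T : ℝ := ∑ n ∈ range N, w n * cpA p w x n ^ q with hTdef
  set X : ℝ := ∑ n ∈ range N, w n * x n with hXdef
  have hT : 0 < T := Finset.sum_pos
    (fun n _ => mul_pos (hw n) (Real.rpow_pos_of_pos (hA n) q)) (by simp [hNM])
  have hX : 0 < X := Finset.sum_pos (fun n _ => mul_pos (hw n) (hx n)) (by simp [hNM])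
  -- Step 1: T ≤ c * U
  have step1 : T ≤ c * ∑ n ∈ range N, w n * x n ^ p * cpA p w x n ^ (q - 1) := by
    have := copson_key hp0 hp1 hw hx M
    rw [← hNM] at this
    nlinarith [mul_pos (hW M) (Real.rpow_pos_of_pos (hA M) q), hc1]
  -- Step 2: Hölder
  have step2 : ∑ n ∈ range N, w n * x n ^ p * cpA p w x n ^ (q - 1) ≤
      X ^ (1 / q) * T ^ (1 / c) := by
    have hHold := Real.inner_le_Lp_mul_Lq_of_nonneg (s := range N)
      (f := fun n => w n ^ p * x n ^ p) (g := fun n => w n ^ (1 - p) * cpA p w x n ^ (q - 1))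
      hconj
      (fun i _ => mul_nonneg (Real.rpow_nonneg (hw i).le _) (Real.rpow_nonneg (hx i).le _))
      (fun i _ => mul_nonneg (Real.rpow_nonneg (hw i).le _) (Real.rpow_nonneg (hA i).le _))
    have e1 : ∀ i, w i ^ p * x i ^ p * (w i ^ (1 - p) * cpA p w x i ^ (q - 1)) =
        w i * x i ^ p * cpA p w x i ^ (q - 1) := by
      intro i
      rw [show w i ^ p * x i ^ p * (w i ^ (1 - p) * cpA p w x i ^ (q - 1)) =
        (w i ^ p * w i ^ (1 - p)) * (x i ^ p * cpA p w x i ^ (q - 1)) by ring,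
        ← Real.rpow_add (hw i), show p + (1 - p) = 1 by ring, Real.rpow_one]
      ring
    have e2 : ∀ i, (w i ^ p * x i ^ p) ^ q = w i * x i := by
      intro i
      rw [Real.mul_rpow (Real.rpow_nonneg (hw i).le p) (Real.rpow_nonneg (hx i).le p),
        ← Real.rpow_mul (hw i).le, ← Real.rpow_mul (hx i).le,
        show p * q = 1 by rw [hqdef]; field_simp, Real.rpow_one, Real.rpow_one]
    have e3 : ∀ i, (w i ^ (1 - p) * cpA p w x i ^ (q - 1)) ^ c = w i * cpA p w x i ^ q := by
      intro i
      rw [Real.mul_rpow (Real.rpow_nonneg (hw i).le _) (Real.rpow_nonneg (hA i).le _),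
        ← Real.rpow_mul (hw i).le, ← Real.rpow_mul (hA i).le,
        show (1 - p) * c = 1 by rw [hcdef]; field_simp,
        show (q - 1) * c = q by rw [hqdef, hcdef]; field_simp,
        Real.rpow_one]
    rw [Finset.sum_congr rfl (fun i _ => e1 i), Finset.sum_congr rfl (fun i _ => e2 i),
      Finset.sum_congr rfl (fun i _ => e3 i)] at hHold
    exact hHold
  -- Step 3: combine
  have step3 : T ≤ c * (X ^ (1 / q) * T ^ (1 / c)) := by
    calc T ≤ c * ∑ n ∈ range N, w n * x n ^ p * cpA p w x n ^ (q - 1) := step1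
      _ ≤ c * (X ^ (1 / q) * T ^ (1 / c)) := by
          exact mul_le_mul_of_nonneg_left step2 hcpos.le
  -- cancel T ^ (1/c)
  have hsplit : T = T ^ (1 / q) * T ^ (1 / c) := by
    rw [← Real.rpow_add hT,
      show 1 / q + 1 / c = 1 by rw [one_div, one_div]; exact hconj.inv_add_inv_eq_one,
      Real.rpow_one]
  have cancel : T ^ (1 / q) ≤ c * X ^ (1 / q) := by
    apply le_of_mul_le_mul_right _ (Real.rpow_pos_of_pos hT (1 / c))
    calc T ^ (1 / q) * T ^ (1 / c) = T := hsplit.symm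
      _ ≤ c * (X ^ (1 / q) * T ^ (1 / c)) := step3
      _ = c * X ^ (1 / q) * T ^ (1 / c) := by ring
  have hfinal : T ≤ c ^ q * X := by
    calc T = (T ^ (1 / q)) ^ q := by
          rw [← Real.rpow_mul hT.le, one_div, inv_mul_cancel₀ hqpos.ne', Real.rpow_one]
      _ ≤ (c * X ^ (1 / q)) ^ q :=
          Real.rpow_le_rpow (Real.rpow_nonneg hT.le _) cancel hqpos.le
      _ = c ^ q * X := by
          rw [Real.mul_rpow hcpos.le (Real.rpow_nonneg hX.le _), ← Real.rpow_mul hX.le,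
            one_div, inv_mul_cancel₀ hqpos.ne', Real.rpow_one]
  have hcq : c ^ q = (1 - p) ^ (-1 / p) := by
    rw [hcdef, hqdef, one_div (1 - p), Real.inv_rpow h1p.le, ← Real.rpow_neg h1p.le,
      show -(1 / p) = -1 / p by ring]
  rw [← hcq]
  exact hfinal

theorem stmt_12 (p : ℝ) (hp0 : 0 < p) (hp1 : p < 1)
    (w x : ℕ → ℝ) (hw : ∀ n, 0 < w n) (hx : ∀ n, 0 < x n) :
    (∑' n : ℕ, ENNReal.ofReal (w n *
        Real.rpow ((∑ k ∈ Finset.range (n + 1), w k * Real.rpow (x k) p) /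
          (∑ k ∈ Finset.range (n + 1), w k)) (1 / p))) ≤
      ENNReal.ofReal (Real.rpow (1 - p) (-1 / p)) *
        ∑' n : ℕ, ENNReal.ofReal (w n * x n) := by
  have h1p : 0 < 1 - p := by linarith
  have hA := cpA_pos (p := p) hw hx
  have hterm : ∀ n, (w n *
      Real.rpow ((∑ k ∈ Finset.range (n + 1), w k * Real.rpow (x k) p) /
        (∑ k ∈ Finset.range (n + 1), w k)) (1 / p)) = w n * cpA p w x n ^ (1 / p) := by
    intro n
    rfl
  rw [ENNReal.tsum_eq_iSup_sum]
  apply iSup_le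
  intro s
  obtain ⟨N, hs⟩ := s.exists_nat_subset_range
  calc ∑ n ∈ s, ENNReal.ofReal (w n *
        Real.rpow ((∑ k ∈ Finset.range (n + 1), w k * Real.rpow (x k) p) /
          (∑ k ∈ Finset.range (n + 1), w k)) (1 / p))
      ≤ ∑ n ∈ Finset.range N, ENNReal.ofReal (w n *
        Real.rpow ((∑ k ∈ Finset.range (n + 1), w k * Real.rpow (x k) p) /
          (∑ k ∈ Finset.range (n + 1), w k)) (1 / p)) :=
        Finset.sum_le_sum_of_subset hs
    _ = ENNReal.ofReal (∑ n ∈ Finset.range N, w n * cpA p w x n ^ (1 / p)) := by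
        rw [ENNReal.ofReal_sum_of_nonneg
          (fun n _ => mul_nonneg (hw n).le (Real.rpow_nonneg (hA n).le _))]
        exact Finset.sum_congr rfl fun n _ => by rw [hterm n]
    _ ≤ ENNReal.ofReal ((1 - p) ^ (-1 / p) * ∑ n ∈ Finset.range N, w n * x n) :=
        ENNReal.ofReal_le_ofReal (copson_finite hp0 hp1 hw hx N)
    _ = ENNReal.ofReal ((1 - p) ^ (-1 / p)) *
          ENNReal.ofReal (∑ n ∈ Finset.range N, w n * x n) :=
        ENNReal.ofReal_mul (Real.rpow_nonneg h1p.le _)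
    _ ≤ ENNReal.ofReal (Real.rpow (1 - p) (-1 / p)) * ∑' n : ℕ, ENNReal.ofReal (w n * x n) := by
        apply mul_le_mul_right
        rw [ENNReal.ofReal_sum_of_nonneg (fun n _ => (mul_pos (hw n) (hx n)).le)]
        exact ENNReal.sum_le_tsum _
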